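/- arXiv:1712.08328 — 6 statements merged into one kernel-verified Lean document; each statement's English description precedes it below -/
import Mathlib

section
/- If x ∈ ℝⁿ satisfies Σᵢ xᵢ = n and ‖x − e‖ ≤ √(n/(n−1)), then x ≥ 0 componentwise, i.e. x lies in the standard simplex. Hence the ball of radius r = √(n/(n−1)) centred at e, intersected with the hyperplane Σᵢ xᵢ = n, is contained in the standard simplex. -/
open Finset

/-- If `x` lies on the hyperplane `∑ i, x i = n` and within Euclidean distance
`r = √(n/(n-1))` of the all-ones vector `e`, then `x ≥ 0` componentwise, i.e. `x` lies in
the standard simplex.  Hence the inscribed ball of radius `r` centred at `e`, intersected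
with the hyperplane, is contained in the standard simplex. -/
theorem karmarkar_inner_sphere_in_simplex (n : ℕ) (hn : 2 ≤ n)
    (e : EuclideanSpace ℝ (Fin n)) (he : ∀ i, e i = 1)
    (x : EuclideanSpace ℝ (Fin n)) (hsum : ∑ i, x i = n)
    (hball : ‖x - e‖ ≤ Real.sqrt (n / (n - 1))) :
    ∀ i, 0 ≤ x i := by
  have hn1 : (1:ℝ) ≤ (n:ℝ) - 1 := by
    have : (2:ℝ) ≤ (n:ℝ) := by exact_mod_cast hn
    linarith
  have hpos : (0:ℝ) < (n:ℝ) - 1 := by linarith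
  have hsq : ∑ i, (x i - 1)^2 ≤ (n:ℝ)/((n:ℝ)-1) := by
    have h := hball
    rw [EuclideanSpace.norm_eq] at h
    have h2 : ∑ i, ‖(x - e) i‖^2 ≤ (n:ℝ)/((n:ℝ)-1) := by
      have := (Real.sqrt_le_sqrt_iff (by positivity)).mp h
      exact this
    calc ∑ i, (x i - 1)^2 = ∑ i, ‖(x - e) i‖^2 := by
          apply Finset.sum_congr rfl
          intro i _
          simp [he i, Real.norm_eq_abs, sq_abs]
        _ ≤ _ := h2
  intro j
  by_contra hj
  push_neg at hj
  set S := Finset.univ.erase j with hS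
  have hsum0 : ∑ i, (x i - 1) = 0 := by
    rw [Finset.sum_sub_distrib]
    simp [hsum]
  have hsplit : ∑ i ∈ S, (x i - 1) = 1 - x j := by
    have := Finset.add_sum_erase Finset.univ (fun i => x i - 1) (Finset.mem_univ j)
    simp only at this
    rw [hsum0] at this
    linarith [this]
  have hcard : (#S : ℝ) = (n:ℝ) - 1 := by
    rw [hS, Finset.card_erase_of_mem (Finset.mem_univ j)]
    simp
    have : 1 ≤ n := by omega
    push_cast [Nat.cast_sub this]
    ring
  have hcheb : (∑ i ∈ S, (x i - 1))^2 ≤ (#S : ℝ) * ∑ i ∈ S, (x i - 1)^2 := by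
    exact_mod_cast sq_sum_le_card_mul_sum_sq (s := S) (f := fun i => x i - 1)
  rw [hsplit, hcard] at hcheb
  have hsplit2 : ∑ i, (x i - 1)^2 = (x j - 1)^2 + ∑ i ∈ S, (x i - 1)^2 := by
    exact (Finset.add_sum_erase Finset.univ (fun i => (x i - 1)^2) (Finset.mem_univ j)).symm
  have hnn : (0:ℝ) < (n:ℝ) := by linarith
  have key : ((1 - x j)^2) * ((n:ℝ)/((n:ℝ)-1)) ≤ (n:ℝ)/((n:ℝ)-1) := by
    have hS2 : (1 - x j)^2 / ((n:ℝ)-1) ≤ ∑ i ∈ S, (x i - 1)^2 := by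
      rw [div_le_iff₀ hpos]
      linarith [hcheb]
    have : (x j - 1)^2 + (1 - x j)^2 / ((n:ℝ)-1) ≤ (n:ℝ)/((n:ℝ)-1) := by
      rw [hsplit2] at hsq
      linarith
    have heq : (x j - 1)^2 + (1 - x j)^2 / ((n:ℝ)-1) = (1 - x j)^2 * ((n:ℝ)/((n:ℝ)-1)) := by
      field_simp
      ring
    linarith [heq ▸ this]
  have hr : (0:ℝ) < (n:ℝ)/((n:ℝ)-1) := by positivity
  have h1 : (1 - x j)^2 ≤ 1 := by
    nlinarith [key, hr]
  nlinarith [h1, hj]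
end

section
/- Let A be a real m × n matrix with Ae = 0, let c ∈ ℝⁿ, and suppose the minimum of cᵀx over the feasible set {x : Ax = 0, Σᵢ xᵢ = n, x ≥ 0} equals 0. Let R = √(n(n−1)). Then for every ρ with 0 < ρ ≤ R, the minimum of cᵀx over the set {x : Ax = 0, Σᵢ xᵢ = n, ‖x − e‖ ≤ ρ} is at most (1 − ρ/R) · cᵀe. -/
open Finset
open scoped RealInnerProductSpace

/-- Karmarkar's improvement bound: if `Ae = 0` and the minimum of `⟪c, x⟫` over the
feasible set `{x : Ax = 0, ∑ i x i = n, x ≥ 0}` equals `0`, then for every radius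
`0 < ρ ≤ R = √(n(n-1))` there is a point of the feasible region of the ball subproblem
`{x : Ax = 0, ∑ i x i = n, ‖x - e‖ ≤ ρ}` whose cost is at most `(1 - ρ/R)·⟪c, e⟫`;
hence the minimum over that set is at most `(1 - ρ/R)·⟪c, e⟫`. -/
theorem karmarkar_sphere_min_bound (n : ℕ) (hn : 2 ≤ n) (m : ℕ)
    (A : Matrix (Fin m) (Fin n) ℝ) (c : EuclideanSpace ℝ (Fin n))
    (e : EuclideanSpace ℝ (Fin n)) (he : ∀ i, e i = 1)
    (hAe : A.mulVec e = 0)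
    (hopt : IsLeast {v : ℝ | ∃ x : EuclideanSpace ℝ (Fin n),
        A.mulVec x = 0 ∧ (∑ i, x i) = n ∧ (∀ i, 0 ≤ x i) ∧ v = ⟪c, x⟫} 0)
    (R : ℝ) (hR : R = Real.sqrt (n * (n - 1)))
    (ρ : ℝ) (hρ0 : 0 < ρ) (hρR : ρ ≤ R) :
    ∃ x : EuclideanSpace ℝ (Fin n),
      A.mulVec x = 0 ∧ (∑ i, x i) = n ∧ ‖x - e‖ ≤ ρ ∧
      ⟪c, x⟫ ≤ (1 - ρ / R) * ⟪c, e⟫ := by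
  have hRpos : 0 < R := lt_of_lt_of_le hρ0 hρR
  -- e is feasible, so ⟪c, e⟫ ≥ 0
  have hce : (0 : ℝ) ≤ ⟪c, e⟫ := by
    apply hopt.2
    exact ⟨e, hAe, by simp [he], fun i => by rw [he i]; norm_num, rfl⟩
  have hfac : 0 ≤ 1 - ρ / R := by
    have : ρ / R ≤ 1 := (div_le_one hRpos).2 hρR
    linarith
  -- optimal point
  obtain ⟨x, hAx, hsum, hxpos, hcx⟩ := hopt.1
  -- ‖x - e‖ ≤ R
  have hnorm : ‖x - e‖ ≤ R := by
    rw [hR, EuclideanSpace.norm_eq]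
    apply Real.sqrt_le_sqrt
    have h1 : ∑ i, ‖(x - e) i‖ ^ 2 = (∑ i, (x i)^2) - n := by
      have : ∀ i, ‖(x - e) i‖ ^ 2 = (x i)^2 - 2 * x i + 1 := by
        intro i
        have : (x - e) i = x i - 1 := by simp [he i]
        rw [this, Real.norm_eq_abs, sq_abs]; ring
      rw [Finset.sum_congr rfl fun i _ => this i]
      rw [Finset.sum_add_distrib, Finset.sum_sub_distrib, ← Finset.mul_sum, hsum]
      simp; ring
    rw [h1]
    have h2 : ∑ i, (x i)^2 ≤ (∑ i, x i)^2 :=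
      Finset.sum_sq_le_sq_sum_of_nonneg (fun i _ => hxpos i)
    rw [hsum] at h2
    nlinarith
  by_cases hle : ‖x - e‖ ≤ ρ
  · exact ⟨x, hAx, hsum, hle, by rw [← hcx]; positivity⟩
  · push_neg at hle
    have hd : 0 < ‖x - e‖ := lt_trans hρ0 hle
    set t : ℝ := ρ / ‖x - e‖ with ht
    have ht0 : 0 < t := div_pos hρ0 hd
    have ht1 : t ≤ 1 := le_of_lt ((div_lt_one hd).2 hle)
    refine ⟨e + t • (x - e), ?_, ?_, ?_, ?_⟩
    · rw [WithLp.ofLp_add, WithLp.ofLp_smul, WithLp.ofLp_sub, Matrix.mulVec_add, Matrix.mulVec_smul, Matrix.mulVec_sub, hAx, hAe]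
      simp
    · have : ∀ i, (e + t • (x - e)) i = 1 + t * (x i - 1) := by
        intro i; simp [he i]
      rw [Finset.sum_congr rfl fun i _ => this i]
      rw [Finset.sum_add_distrib, ← Finset.mul_sum, Finset.sum_sub_distrib, hsum]
      simp
    · have : e + t • (x - e) - e = t • (x - e) := by abel
      rw [this, norm_smul, Real.norm_eq_abs, abs_of_pos ht0, ht,
        div_mul_cancel₀ _ (ne_of_gt hd)]
    · have hiexp : ⟪c, e + t • (x - e)⟫ = (1 - t) * ⟪c, e⟫ + t * ⟪c, x⟫ := by
        rw [inner_add_right, real_inner_smul_right, inner_sub_right]; ring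
      rw [hiexp, ← hcx]
      have htR : ρ / R ≤ t := by
        exact div_le_div_of_nonneg_left (le_of_lt hρ0) hd hnorm
      nlinarith
end

section
/- Let a, b, c ∈ ℝ with a² = b² + c², and let x > 0 be such that −|a|x > −1 (hence also bx > −1 and cx > −1). Then Ψ(−|a|x) ≥ Ψ(bx) + Ψ(cx), where Ψ(t) = t − log(1 + t). -/
open Real Set

private lemma psi_hasDeriv (k t : ℝ) (hkt : 0 < 1 + k * t) :
    HasDerivAt (fun s => k * s - Real.log (1 + k * s)) (k - k / (1 + k * t)) t := by
  have h1 : HasDerivAt (fun s : ℝ => 1 + k * s) k t := by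
    simpa using ((hasDerivAt_id t).const_mul k).const_add 1
  have h2 := (Real.hasDerivAt_log (ne_of_gt hkt)).comp t h1
  have h3 : HasDerivAt (fun s : ℝ => k * s) k t := by
    simpa using (hasDerivAt_id t).const_mul k
  simpa [Pi.sub_def, Function.comp_def, div_eq_mul_inv, mul_comm] using h3.sub h2

/-- For `Ψ(t) = t - log(1 + t)`: if `a² = b² + c²`, `x > 0`, and `-|a|·x > -1`
(hence also `b·x > -1` and `c·x > -1`), then `Ψ(-|a|·x) ≥ Ψ(b·x) + Ψ(c·x)`. -/
theorem psi_superadditive_pair (a b c x : ℝ) (habc : a ^ 2 = b ^ 2 + c ^ 2)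
    (hx : 0 < x) (h : -1 < -|a| * x) :
    (b * x - Real.log (1 + b * x)) + (c * x - Real.log (1 + c * x)) ≤
      -|a| * x - Real.log (1 + -|a| * x) := by
  set A := |a| with hA
  have hA0 : 0 ≤ A := abs_nonneg a
  have hb2 : b ^ 2 ≤ A ^ 2 := by rw [hA, sq_abs]; nlinarith [sq_nonneg c]
  have hc2 : c ^ 2 ≤ A ^ 2 := by rw [hA, sq_abs]; nlinarith [sq_nonneg b]
  have hbA : -A ≤ b := by nlinarith
  have hcA : -A ≤ c := by nlinarith
  have hAx : A * x < 1 := by linarith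
  set f : ℝ → ℝ := fun t =>
    ((-A) * t - Real.log (1 + (-A) * t)) - (b * t - Real.log (1 + b * t))
      - (c * t - Real.log (1 + c * t)) with hf
  -- positivity on Icc
  have hpos : ∀ t ∈ Icc (0:ℝ) x, 0 < 1 + (-A) * t ∧ 0 < 1 + b * t ∧ 0 < 1 + c * t := by
    intro t ht
    obtain ⟨ht0, htx⟩ := ht
    have hAt : A * t ≤ A * x := by apply mul_le_mul_of_nonneg_left htx hA0
    have hp : 0 < 1 + (-A) * t := by nlinarith
    refine ⟨hp, ?_, ?_⟩
    · nlinarith [mul_le_mul_of_nonneg_right hbA ht0]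
    · nlinarith [mul_le_mul_of_nonneg_right hcA ht0]
  have hder : ∀ t ∈ Icc (0:ℝ) x, HasDerivAt f
      (((-A) - (-A) / (1 + (-A) * t)) - (b - b / (1 + b * t)) - (c - c / (1 + c * t))) t := by
    intro t ht
    obtain ⟨hp, hq, hr⟩ := hpos t ht
    exact ((psi_hasDeriv (-A) t hp).sub (psi_hasDeriv b t hq)).sub (psi_hasDeriv c t hr)
  have hmono : MonotoneOn f (Icc 0 x) := by
    apply monotoneOn_of_deriv_nonneg (convex_Icc 0 x)
    · exact fun t ht => ((hder t ht).differentiableAt).continuousAt.continuousWithinAt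
    · intro t ht
      rw [interior_Icc] at ht
      exact ((hder t (Ioo_subset_Icc_self ht)).differentiableAt).differentiableWithinAt
    · intro t ht
      rw [interior_Icc] at ht
      have htIcc := Ioo_subset_Icc_self ht
      rw [(hder t htIcc).deriv]
      obtain ⟨hp, hq, hr⟩ := hpos t htIcc
      obtain ⟨ht0, htx⟩ := ht
      have hp' : (1 + (-A) * t) ≠ 0 := ne_of_gt hp
      have hq' : (1 + b * t) ≠ 0 := ne_of_gt hq
      have hr' : (1 + c * t) ≠ 0 := ne_of_gt hr
      have e1 : (-A) - (-A) / (1 + (-A) * t) = A ^ 2 * t / (1 + (-A) * t) := by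
        rw [eq_div_iff hp', sub_mul, div_mul_cancel₀ _ hp']; ring
      have e2 : b - b / (1 + b * t) = b ^ 2 * t / (1 + b * t) := by
        rw [eq_div_iff hq', sub_mul, div_mul_cancel₀ _ hq']; ring
      have e3 : c - c / (1 + c * t) = c ^ 2 * t / (1 + c * t) := by
        rw [eq_div_iff hr', sub_mul, div_mul_cancel₀ _ hr']; ring
      rw [e1, e2, e3]
      have hpq : 1 + (-A) * t ≤ 1 + b * t := by nlinarith
      have hpr : 1 + (-A) * t ≤ 1 + c * t := by nlinarith
      have i1 : b ^ 2 * t / (1 + b * t) ≤ b ^ 2 * t / (1 + (-A) * t) :=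
        div_le_div_of_nonneg_left (by positivity) hp hpq
      have i2 : c ^ 2 * t / (1 + c * t) ≤ c ^ 2 * t / (1 + (-A) * t) :=
        div_le_div_of_nonneg_left (by positivity) hp hpr
      have hsum : b ^ 2 * t / (1 + (-A) * t) + c ^ 2 * t / (1 + (-A) * t)
          = A ^ 2 * t / (1 + (-A) * t) := by
        rw [← add_div, hA, sq_abs]; ring_nf; rw [habc]; ring
      linarith
  have h0 : f 0 = 0 := by simp [hf]
  have hfx := hmono (left_mem_Icc.mpr hx.le) (right_mem_Icc.mpr hx.le) hx.le
  rw [h0] at hfx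
  have : (-A) * x = -A * x := rfl
  simp only [hf] at hfx
  linarith
end

section
/- Let a, b₁, …, b_s ∈ ℝ with a² = b₁² + b₂² + ⋯ + b_s², and let x > 0 be such that −|a|x > −1 (hence each bᵢx > −1). Then Ψ(−|a|x) ≥ Ψ(b₁x) + Ψ(b₂x) + ⋯ + Ψ(b_sx), where Ψ(t) = t − log(1 + t). -/
open Finset

/-- For `Ψ(t) = t - log(1 + t)`: if `a² = b₁² + ⋯ + b_s²`, `x > 0`, and `-|a|·x > -1`
(hence each `bᵢ·x > -1`), then `Ψ(-|a|·x) ≥ ∑ i, Ψ(bᵢ·x)`. -/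
theorem psi_superadditive (s : ℕ) (a : ℝ) (b : Fin s → ℝ) (x : ℝ)
    (hab : a ^ 2 = ∑ i, b i ^ 2) (hx : 0 < x) (h : -1 < -|a| * x) :
    ∑ i, (b i * x - Real.log (1 + b i * x)) ≤
      -|a| * x - Real.log (1 + -|a| * x) := by
  rw [neg_mul] at h ⊢
  set u : ℝ := |a| * x with hu
  have hu0 : 0 ≤ u := mul_nonneg (abs_nonneg a) hx.le
  have hu1 : u < 1 := by linarith
  have hb : ∀ i, |b i * x| ≤ u := by
    intro i
    have h1 : b i ^ 2 ≤ a ^ 2 := by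
      rw [hab]
      exact Finset.single_le_sum (fun j _ => sq_nonneg (b j)) (Finset.mem_univ i)
    have h2 : |b i| ≤ |a| := by
      nlinarith [abs_nonneg (b i), abs_nonneg a, sq_abs (b i), sq_abs a,
        sq_nonneg (|b i| - |a|), sq_nonneg (|b i| + |a|)]
    rw [abs_mul, abs_of_pos hx]
    exact mul_le_mul_of_nonneg_right h2 hx.le
  have hseries : ∀ i, HasSum (fun n : ℕ => (-(b i * x)) ^ (n + 2) / (n + 2))
      (b i * x - Real.log (1 + b i * x)) := by
    intro i
    have habs : |(-(b i * x))| < 1 := by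
      rw [abs_neg]; exact lt_of_le_of_lt (hb i) hu1
    have h1 := Real.hasSum_pow_div_log_of_abs_lt_one habs
    rw [sub_neg_eq_add] at h1
    have h2 := (hasSum_nat_add_iff' (f := fun n : ℕ => (-(b i * x)) ^ (n + 1) / (n + 1)) 1).mpr h1
    simp only [Finset.range_one, Finset.sum_singleton, pow_one, Nat.cast_zero, zero_add,
      div_one] at h2
    have h3 : HasSum (fun n : ℕ => (-(b i * x)) ^ (n + 2) / (n + 2))
        (-Real.log (1 + b i * x) - -(b i * x)) := by
      convert h2 using 2 with n
      · rfl
      push_cast; ring_nf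
    have heq : b i * x - Real.log (1 + b i * x)
        = -Real.log (1 + b i * x) - -(b i * x) := by ring
    rw [heq]; exact h3
  have hUseries : HasSum (fun n : ℕ => u ^ (n + 2) / (n + 2))
      (-u - Real.log (1 + -u)) := by
    have habs : |u| < 1 := by rwa [abs_of_nonneg hu0]
    have h1 := Real.hasSum_pow_div_log_of_abs_lt_one habs
    rw [sub_eq_add_neg] at h1
    have h2 := (hasSum_nat_add_iff' (f := fun n : ℕ => u ^ (n + 1) / (n + 1)) 1).mpr h1
    simp only [Finset.range_one, Finset.sum_singleton, pow_one, Nat.cast_zero, zero_add,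
      div_one] at h2
    have h3 : HasSum (fun n : ℕ => u ^ (n + 2) / (n + 2))
        (-Real.log (1 + -u) - u) := by
      convert h2 using 2 with n
      · rfl
      push_cast; ring_nf
    have heq : -u - Real.log (1 + -u) = -Real.log (1 + -u) - u := by ring
    rw [heq]; exact h3
  have hsum : HasSum (fun n : ℕ => ∑ i, (-(b i * x)) ^ (n + 2) / (n + 2))
      (∑ i, (b i * x - Real.log (1 + b i * x))) :=
    hasSum_sum (fun i _ => hseries i)
  refine hasSum_le (fun n => ?_) hsum hUseries
  have hden : (0 : ℝ) < (n : ℝ) + 2 := by positivity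
  rw [← Finset.sum_div]
  apply div_le_div_of_nonneg_right ?_ hden.le
  have step : ∀ i, (-(b i * x)) ^ (n + 2) ≤ (b i * x) ^ 2 * u ^ n := by
    intro i
    calc (-(b i * x)) ^ (n + 2) ≤ |(-(b i * x)) ^ (n + 2)| := le_abs_self _
      _ = |b i * x| ^ (n + 2) := by rw [abs_pow, abs_neg]
      _ = |b i * x| ^ 2 * |b i * x| ^ n := by ring
      _ ≤ |b i * x| ^ 2 * u ^ n :=
          mul_le_mul_of_nonneg_left (pow_le_pow_left₀ (abs_nonneg _) (hb i) n) (by positivity)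
      _ = (b i * x) ^ 2 * u ^ n := by rw [sq_abs]
  calc ∑ i, (-(b i * x)) ^ (n + 2) ≤ ∑ i, (b i * x) ^ 2 * u ^ n :=
        Finset.sum_le_sum (fun i _ => step i)
    _ = (∑ i, b i ^ 2) * x ^ 2 * u ^ n := by
        rw [Finset.sum_mul, Finset.sum_mul]
        exact Finset.sum_congr rfl (fun i _ => by ring)
    _ = u ^ (n + 2) := by rw [← hab, hu, ← sq_abs a]; ring
end

section
/- Let p ∈ ℝⁿ be a unit vector (Σᵢ pᵢ² = 1) with Σᵢ pᵢ = 0, and let 0 < t < 1. Then 1 − t·pᵢ > 0 for every i, and −Σᵢ log(1 − t·pᵢ) ≤ −t − log(1 − t) = Ψ(−t). Equivalently, for z = e − t·p one has z > 0 componentwise, Σᵢ zᵢ = n, and Σᵢ log zᵢ ≥ −Ψ(−t). -/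
open Finset

/-- Series form of `-s - log(1-s)`. -/
lemma hasSum_f {x : ℝ} (h : |x| < 1) :
    HasSum (fun n : ℕ => x ^ (n + 2) / (n + 2)) (-Real.log (1 - x) - x) := by
  have H := Real.hasSum_pow_div_log_of_abs_lt_one h
  have := (hasSum_nat_add_iff' (f := fun n : ℕ => x ^ (n + 1) / (n + 1)) 1).2 H
  simp only [range_one, sum_singleton] at this
  convert this using 2 with m
  · rfl
  · push_cast; ring_nf
  · push_cast; norm_num

/-- Key pointwise bound: for `|x| ≤ t < 1`,
`-x - log(1-x) ≤ (x²/t²) (-t - log(1-t))`. -/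
lemma key {x t : ℝ} (ht0 : 0 < t) (ht1 : t < 1) (hx : |x| ≤ t) :
    -Real.log (1 - x) - x ≤ x ^ 2 / t ^ 2 * (-Real.log (1 - t) - t) := by
  have hx1 : |x| < 1 := lt_of_le_of_lt hx ht1
  have ht1' : |t| < 1 := by rw [abs_of_pos ht0]; exact ht1
  have h1 := hasSum_f hx1
  have h2 := (hasSum_f ht1').mul_left (x ^ 2 / t ^ 2)
  refine hasSum_le (fun n => ?_) h1 h2
  have ht2 : (0:ℝ) < t ^ 2 := by positivity
  have hnum : x ^ (n + 2) ≤ x ^ 2 / t ^ 2 * t ^ (n + 2) := by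
    calc x ^ (n + 2) ≤ |x ^ (n + 2)| := le_abs_self _
    _ = x ^ 2 * |x| ^ n := by
        rw [abs_pow, pow_add, sq_abs]; ring
    _ ≤ x ^ 2 * t ^ n := by
        apply mul_le_mul_of_nonneg_left (pow_le_pow_left₀ (abs_nonneg _) hx n) (by positivity)
    _ = x ^ 2 / t ^ 2 * t ^ (n + 2) := by field_simp; ring
  rw [show x ^ 2 / t ^ 2 * (t ^ (n + 2) / (↑n + 2)) = (x ^ 2 / t ^ 2 * t ^ (n + 2)) / (↑n + 2) by ring]
  exact div_le_div_of_nonneg_right hnum (by positivity)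

/-- Let `p` be a unit vector (`∑ i, pᵢ² = 1`) with `∑ i, pᵢ = 0`, and `0 < t < 1`.
Then each `1 - t·pᵢ > 0` and `-∑ i, log (1 - t·pᵢ) ≤ -t - log (1 - t) = Ψ(-t)`.
Equivalently, `z = e - t·p` satisfies `z > 0`, `∑ i, zᵢ = n`, and
`∑ i, log zᵢ ≥ -Ψ(-t)`. -/
theorem sum_log_z_bound (n : ℕ) (hn : 2 ≤ n) (p : Fin n → ℝ)
    (hp : ∑ i, p i ^ 2 = 1) (hp0 : ∑ i, p i = 0)
    (t : ℝ) (ht0 : 0 < t) (ht1 : t < 1) :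
    (∀ i, 0 < 1 - t * p i) ∧
    (-∑ i, Real.log (1 - t * p i) ≤ -t - Real.log (1 - t)) ∧
    (∑ i, (1 - t * p i) = n) ∧
    (∑ i, Real.log (1 - t * p i) ≥ -(-t - Real.log (1 + -t))) := by
  have hpabs : ∀ i, |p i| ≤ 1 := by
    intro i
    have : p i ^ 2 ≤ 1 := by
      rw [← hp]
      exact single_le_sum (fun j _ => sq_nonneg (p j)) (mem_univ i)
    nlinarith [abs_nonneg (p i), sq_abs (p i)]
  have habs : ∀ i, |t * p i| ≤ t := by
    intro i
    rw [abs_mul, abs_of_pos ht0]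
    nlinarith [hpabs i, abs_nonneg (p i)]
  have hpos : ∀ i, 0 < 1 - t * p i := by
    intro i
    have := (abs_le.1 (habs i)).2
    linarith
  have hmain : -∑ i, Real.log (1 - t * p i) ≤ -t - Real.log (1 - t) := by
    have hkey : ∀ i, -Real.log (1 - t * p i) - t * p i ≤
        (t * p i) ^ 2 / t ^ 2 * (-Real.log (1 - t) - t) :=
      fun i => key ht0 ht1 (habs i)
    have hsum := sum_le_sum (fun i (_ : i ∈ univ) => hkey i)
    have e1 : ∑ i, (-Real.log (1 - t * p i) - t * p i)
        = -∑ i, Real.log (1 - t * p i) := by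
      rw [sum_sub_distrib, ← mul_sum, hp0, sum_neg_distrib]
      ring
    have e2 : ∑ i, (t * p i) ^ 2 / t ^ 2 * (-Real.log (1 - t) - t)
        = -Real.log (1 - t) - t := by
      rw [← sum_mul]
      have : ∑ i, (t * p i) ^ 2 / t ^ 2 = 1 := by
        have : ∀ i, (t * p i) ^ 2 / t ^ 2 = p i ^ 2 := by
          intro i; field_simp
        simp_rw [this, hp]
      rw [this, one_mul]
    rw [e1, e2] at hsum
    linarith
  refine ⟨hpos, hmain, ?_, ?_⟩
  · rw [sum_sub_distrib, ← mul_sum, hp0, sum_const, card_univ]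
    simp
  · have : (1 : ℝ) + -t = 1 - t := by ring
    rw [this]
    linarith
end

section
/- Let n ≥ 2, r = √(n/(n−1)), R = √(n(n−1)), α = 1/(1 + r). Let p ∈ ℝⁿ be a unit vector with Σᵢ pᵢ = 0 and set z = e − αr·p (so zᵢ = 1 − αr·pᵢ > 0 for every i). Then −n·log(1 − αr/R) + Σᵢ log zᵢ ≥ 1 − log 2. Consequently, for any cost vector c with cᵀz > 0 and cᵀz ≤ (1 − αr/R)·cᵀe, the potential Φ(x) = n·log(cᵀx) − Σᵢ log xᵢ satisfies Φ(e) − Φ(z) ≥ 1 − log 2; i.e. the potential decreases by at least the constant 1 − log 2 in one Karmarkar iteration. -/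
open Finset

lemma karmarkar_key {x β : ℝ} (hβ : β < 1) (hx : |x| ≤ β) :
    β ^ 2 * (-Real.log (1 - x) - x) ≤ x ^ 2 * (-Real.log (1 - β) - β) := by
  have hβ0 : 0 ≤ β := (abs_nonneg x).trans hx
  have hx1 : |x| < 1 := lt_of_le_of_lt hx hβ
  have hβ1 : |β| < 1 := by rwa [abs_of_nonneg hβ0]
  have hs : ∀ y : ℝ, |y| < 1 →
      HasSum (fun m : ℕ => y ^ (m + 2) / (m + 2)) (-Real.log (1 - y) - y) := by
    intro y hy
    have h1 := Real.hasSum_pow_div_log_of_abs_lt_one hy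
    have h2 := (hasSum_nat_add_iff' (f := fun n : ℕ => y ^ (n + 1) / (n + 1)) 1).mpr h1
    simp only [Finset.range_one, Finset.sum_singleton, pow_one, Nat.cast_zero, zero_add,
      div_one] at h2
    convert h2 using 2 with m
    · rfl
    push_cast
    ring_nf
  have hA := (hs x hx1).mul_left (β ^ 2)
  have hB := (hs β hβ1).mul_left (x ^ 2)
  refine hasSum_le (fun m => ?_) hA hB
  have hpow : x ^ m ≤ β ^ m := by
    calc x ^ m ≤ |x ^ m| := le_abs_self _
    _ = |x| ^ m := abs_pow x m
    _ ≤ β ^ m := pow_le_pow_left₀ (abs_nonneg x) hx m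
  have hm : (0:ℝ) < (m : ℝ) + 2 := by positivity
  calc β ^ 2 * (x ^ (m + 2) / ((m : ℝ) + 2))
      = (β ^ 2 * x ^ 2 / ((m : ℝ) + 2)) * x ^ m := by ring
    _ ≤ (β ^ 2 * x ^ 2 / ((m : ℝ) + 2)) * β ^ m := by
        exact mul_le_mul_of_nonneg_left hpow (by positivity)
    _ = x ^ 2 * (β ^ (m + 2) / ((m : ℝ) + 2)) := by ring

set_option maxHeartbeats 1000000 in
/-- One Karmarkar iteration decreases the potential by at least `1 - log 2`.
Let `n ≥ 2`, `r = √(n/(n-1))`, `R = √(n(n-1))`, `α = 1/(1+r)`, let `p` be a unit vector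
with `∑ i, pᵢ = 0`, and set `z = e - αr·p`.  Then `z > 0` componentwise,
`-n·log(1 - αr/R) + ∑ i, log zᵢ ≥ 1 - log 2`; consequently, for any cost vector `c` with
`cᵀz > 0` and `cᵀz ≤ (1 - αr/R)·cᵀe`, the potential
`Φ(x) = n·log(cᵀx) - ∑ i, log xᵢ` satisfies `Φ(e) - Φ(z) ≥ 1 - log 2`. -/
theorem karmarkar_potential_decrease (n : ℕ) (hn : 2 ≤ n)
    (r R α : ℝ) (hr : r = Real.sqrt (n / (n - 1))) (hR : R = Real.sqrt (n * (n - 1)))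
    (hα : α = 1 / (1 + r))
    (p : Fin n → ℝ) (hp : ∑ i, p i ^ 2 = 1) (hp0 : ∑ i, p i = 0)
    (z : Fin n → ℝ) (hz : ∀ i, z i = 1 - α * r * p i) :
    (∀ i, 0 < z i) ∧
    (-(n : ℝ) * Real.log (1 - α * r / R) + ∑ i, Real.log (z i) ≥ 1 - Real.log 2) ∧
    (∀ c : Fin n → ℝ, 0 < ∑ i, c i * z i →
      (∑ i, c i * z i) ≤ (1 - α * r / R) * (∑ i, c i) →
      ((n : ℝ) * Real.log (∑ i, c i) - ∑ _i : Fin n, Real.log (1 : ℝ)) -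
        ((n : ℝ) * Real.log (∑ i, c i * z i) - ∑ i, Real.log (z i))
        ≥ 1 - Real.log 2) := by
  have hn2 : (2:ℝ) ≤ (n:ℝ) := by exact_mod_cast hn
  have hn1 : (0:ℝ) < (n:ℝ) - 1 := by linarith
  have hnpos : (0:ℝ) < (n:ℝ) := by linarith
  -- basic facts about r and R
  have hdiv0 : (0:ℝ) ≤ (n:ℝ) / ((n:ℝ) - 1) := div_nonneg (le_of_lt hnpos) (le_of_lt hn1)
  have hmul0 : (0:ℝ) ≤ (n:ℝ) * ((n:ℝ) - 1) := mul_nonneg (le_of_lt hnpos) (le_of_lt hn1)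
  have hrsq : r ^ 2 = (n:ℝ) / ((n:ℝ) - 1) := by
    rw [hr, Real.sq_sqrt hdiv0]
  have hr0 : 0 ≤ r := hr ▸ Real.sqrt_nonneg _
  have hr1 : 1 < r := by
    have h1 : 1 < r ^ 2 := by
      rw [hrsq, lt_div_iff₀ hn1]; linarith
    nlinarith [h1, hr0]
  have hRsq : R ^ 2 = (n:ℝ) * ((n:ℝ) - 1) := by
    rw [hR, Real.sq_sqrt hmul0]
  have hR0 : 0 ≤ R := hR ▸ Real.sqrt_nonneg _
  have hR1 : 1 < R := by nlinarith [hRsq, hR0, hn2]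
  have hrR : r * R = n := by
    rw [hr, hR, ← Real.sqrt_mul hdiv0]
    rw [show (n:ℝ) / ((n:ℝ) - 1) * ((n:ℝ) * ((n:ℝ) - 1)) = (n:ℝ) ^ 2 by field_simp]
    exact Real.sqrt_sq (le_of_lt hnpos)
  -- β = αr
  set β : ℝ := α * r with hβdef
  have h1r : (0:ℝ) < 1 + r := by linarith
  have hαpos : 0 < α := by rw [hα]; positivity
  have hβpos : 0 < β := by positivity
  have hβ1r : β * (1 + r) = r := by
    rw [hβdef, hα]; field_simp
  have hβlt : β < 1 := by nlinarith
  have h1β : 1 - β = 1 / (1 + r) := by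
    have : (1 - β) * (1 + r) = 1 := by nlinarith
    field_simp at this ⊢
    linarith
  have hpabs : ∀ i, |p i| ≤ 1 := by
    intro i
    rw [← sq_le_one_iff_abs_le_one]
    calc p i ^ 2 ≤ ∑ j, p j ^ 2 :=
      Finset.single_le_sum (fun j _ => sq_nonneg (p j)) (Finset.mem_univ i)
    _ = 1 := hp
  have hxabs : ∀ i, |β * p i| ≤ β := by
    intro i
    rw [abs_mul, abs_of_pos hβpos]
    calc β * |p i| ≤ β * 1 := by
          exact mul_le_mul_of_nonneg_left (hpabs i) (le_of_lt hβpos)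
      _ = β := mul_one β
  -- Part 1
  have hzpos : ∀ i, 0 < z i := by
    intro i
    rw [hz i, show α * r * p i = β * p i by rw [hβdef]]
    have := hxabs i
    have := abs_le.mp this
    linarith
  -- Sum of logs lower bound
  have hsumlog : ∑ i, Real.log (z i) ≥ Real.log (1 - β) + β := by
    have hterm : ∀ i ∈ Finset.univ,
        (β * p i) ^ 2 * (Real.log (1 - β) + β) - β ^ 2 * (β * p i)
          ≤ β ^ 2 * Real.log (z i) := by
      intro i _
      have hk := karmarkar_key hβlt (hxabs i)
      rw [hz i, show α * r * p i = β * p i by rw [hβdef]]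
      linarith [hk]
    have hsum := Finset.sum_le_sum hterm
    have hL : ∑ i, ((β * p i) ^ 2 * (Real.log (1 - β) + β) - β ^ 2 * (β * p i))
        = β ^ 2 * (Real.log (1 - β) + β) := by
      have heq : ∀ i, (β * p i) ^ 2 * (Real.log (1 - β) + β) - β ^ 2 * (β * p i)
          = (β ^ 2 * (Real.log (1 - β) + β)) * (p i ^ 2) + (-(β ^ 3)) * p i := by
        intro i; ring
      rw [Finset.sum_congr rfl (fun i _ => heq i), Finset.sum_add_distrib,
        ← Finset.mul_sum, ← Finset.mul_sum, hp, hp0]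
      ring
    have hR2 : ∑ i, β ^ 2 * Real.log (z i) = β ^ 2 * ∑ i, Real.log (z i) := by
      rw [Finset.mul_sum]
    rw [hL, hR2] at hsum
    have hb2 : (0:ℝ) < β ^ 2 := by positivity
    exact (mul_le_mul_iff_right₀ hb2).mp hsum
  -- t = β / R
  have hRpos : (0:ℝ) < R := by linarith
  have htpos : 0 < α * r / R := div_pos (by positivity) hRpos
  have htlt : α * r / R < 1 := by
    rw [div_lt_one (by linarith)]
    calc α * r = β := rfl
      _ < 1 := hβlt
      _ < R := hR1
  have hnt : (n:ℝ) * (α * r / R) = β * r := by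
    rw [← hrR]; field_simp [hβdef]; ring
  have hlogt : Real.log (1 - α * r / R) ≤ -(α * r / R) := by
    have := Real.log_le_sub_one_of_pos (show (0:ℝ) < 1 - α * r / R by linarith)
    linarith
  -- main inequality of Part 2
  have part2 : -(n : ℝ) * Real.log (1 - α * r / R) + ∑ i, Real.log (z i)
      ≥ 1 - Real.log 2 := by
    have h1 : -(n:ℝ) * Real.log (1 - α * r / R) ≥ β * r := by
      have hmul : (n:ℝ) * Real.log (1 - α * r / R) ≤ (n:ℝ) * (-(α * r / R)) :=
        mul_le_mul_of_nonneg_left hlogt (le_of_lt hnpos)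
      have : (n:ℝ) * (-(α * r / R)) = -(β * r) := by rw [← hnt]; ring
      linarith
    have h2 : Real.log (1 - β) = -Real.log (1 + r) := by
      rw [h1β, one_div, Real.log_inv]
    have h3 : Real.log (1 + r) - Real.log 2 ≤ (1 + r) / 2 - 1 := by
      have hpos : (0:ℝ) < (1 + r) / 2 := by linarith
      have := Real.log_le_sub_one_of_pos hpos
      rw [Real.log_div (by linarith) (by norm_num)] at this
      linarith
    have hβr : β * r + β = r := by linear_combination hβ1r
    linarith only [h1, hsumlog, h2, h3, hβr, hr1]
  refine ⟨hzpos, part2, ?_⟩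
  -- Part 3
  intro c hc1 hc2
  have ht1 : (0:ℝ) < 1 - α * r / R := by linarith
  have hSpos : 0 < ∑ i, c i := by
    by_contra h
    push_neg at h
    have : (1 - α * r / R) * (∑ i, c i) ≤ 0 :=
      mul_nonpos_of_nonneg_of_nonpos (le_of_lt ht1) h
    linarith
  have hkey : Real.log (∑ i, c i) ≥ Real.log (∑ i, c i * z i) - Real.log (1 - α * r / R) := by
    have hq : (∑ i, c i * z i) / (1 - α * r / R) ≤ ∑ i, c i := by
      rw [div_le_iff₀ ht1]; linarith [hc2]
    have hqpos : 0 < (∑ i, c i * z i) / (1 - α * r / R) := by positivity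
    have := Real.log_le_log hqpos hq
    rwa [Real.log_div (ne_of_gt hc1) (ne_of_gt ht1)] at this
  have hmul : (n:ℝ) * Real.log (∑ i, c i)
      ≥ (n:ℝ) * (Real.log (∑ i, c i * z i) - Real.log (1 - α * r / R)) :=
    mul_le_mul_of_nonneg_left hkey (le_of_lt hnpos)
  have hzero : ∑ _i : Fin n, Real.log (1 : ℝ) = 0 := by simp
  rw [hzero]
  linarith only [part2, hmul]
end
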